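/- Let b be a 2×2 real symmetric positive definite matrix (for the standard inner product) with det b = 1, E the identity, J = [[0,-1],[1,0]], J' = (E+b)⁻¹J(E+b), and B' = -J'(E+b)⁻¹(E-b). Then tr(J'B') = 0. -/

import Mathlib

open Matrix

theorem stmt_9 (b J J' B' : Matrix (Fin 2) (Fin 2) ℝ)
    (hb : b.PosDef) (hsymm : bᵀ = b) (hdet : b.det = 1)
    (hJ : J = !![0, -1; 1, 0])
    (hJ' : J' = (1 + b)⁻¹ * J * (1 + b))
    (hB' : B' = -(J' * ((1 + b)⁻¹ * (1 - b)))) :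
    (J' * B').trace = 0 := by
  have hpd : (1 + b).PosDef := Matrix.PosDef.one.add_posSemidef hb.posSemidef
  have hdpos : 0 < (1 + b).det := hpd.det_pos
  have hu : IsUnit (1 + b).det := isUnit_iff_ne_zero.mpr (ne_of_gt hdpos)
  have hc : b 1 0 = b 0 1 := by rw [show b 1 0 = bᵀ 0 1 from rfl, hsymm]
  have hJJ : J * J = -1 := by
    rw [hJ]
    norm_num [← Matrix.ext_iff, Matrix.mul_apply, Fin.sum_univ_two, Fin.forall_fin_two,
      Matrix.one_apply]
  have hJ'J' : J' * J' = -1 := by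
    rw [hJ']
    calc (1 + b)⁻¹ * J * (1 + b) * ((1 + b)⁻¹ * J * (1 + b))
        = (1 + b)⁻¹ * J * ((1 + b) * (1 + b)⁻¹) * J * (1 + b) := by noncomm_ring
      _ = (1 + b)⁻¹ * (J * J) * (1 + b) := by
          rw [Matrix.mul_nonsing_inv _ hu]; noncomm_ring
      _ = -1 := by
          rw [hJJ]
          simp [Matrix.nonsing_inv_mul _ hu]
  have hkey : J' * B' = (1 + b)⁻¹ * (1 - b) := by
    rw [hB', mul_neg, ← mul_assoc, hJ'J']
    simp
  have h1b : (1 + b) = !![1 + b 0 0, b 0 1; b 0 1, 1 + b 1 1] := by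
    ext i j
    fin_cases i <;> fin_cases j <;>
      simp [Matrix.add_apply, Matrix.one_apply, hc]
  have h1b' : (1 - b) = !![1 - b 0 0, -b 0 1; -b 0 1, 1 - b 1 1] := by
    ext i j
    fin_cases i <;> fin_cases j <;>
      simp [Matrix.sub_apply, Matrix.one_apply, hc]
  have hdb : b 0 0 * b 1 1 - b 0 1 * b 0 1 = 1 := by
    have := hdet
    rw [Matrix.det_fin_two, hc] at this
    exact this
  have hdet2 : (1 + b).det = 2 + b 0 0 + b 1 1 := by
    rw [h1b, Matrix.det_fin_two_of]
    nlinarith [hdb]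
  have hD : (2 + b 0 0 + b 1 1) ≠ 0 := by rw [← hdet2]; exact ne_of_gt hdpos
  have hinv : (1 + b)⁻¹ =
      (2 + b 0 0 + b 1 1)⁻¹ • !![1 + b 1 1, -(b 0 1); -(b 0 1), 1 + b 0 0] := by
    rw [Matrix.inv_def, hdet2, h1b, Matrix.adjugate_fin_two]
    simp [Ring.inverse_eq_inv']
  rw [hkey, hinv, h1b']
  simp only [Matrix.trace_fin_two, Matrix.smul_mul, Matrix.of_apply, Matrix.smul_apply, Matrix.mul_apply,
    Fin.sum_univ_two, smul_eq_mul, Matrix.cons_val', Matrix.cons_val_zero, Matrix.cons_val_one,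
    Matrix.head_cons, Matrix.empty_val', Matrix.cons_val_fin_one, Matrix.head_fin_const]
  field_simp
  nlinarith [hdb]
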